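/- For any ξ_1, ξ_2, …, ξ_{p+1} in the span E of the generators ϑ_1, …, ϑ_n, one has Σ_{σ ∈ Sym(p+1)} ξ_{σ(1)}·ξ_{σ(2)}⋯ξ_{σ(p+1)} = 0 in Ξ_n(p), where Sym(p+1) is the symmetric group on {1,…,p+1}. -/

import Mathlib

noncomputable section

open scoped BigOperators

/-- Commutator `[x, y] = x*y - y*x` in an associative ring. -/
def brk {A : Type*} [Ring A] (x y : A) : A := x * y - y * x

/-- The span of the generators of the free algebra on `ϑ_1, …, ϑ_n`. -/
def Espan (n : ℕ) : Submodule ℂ (FreeAlgebra ℂ (Fin n)) :=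
  Submodule.span ℂ (Set.range (FreeAlgebra.ι ℂ))

/-- Defining relations of the para-algebra `Ξ_n(p)`: for all `ξ, η, ζ` in the span of the
generators, `ξ^p·η + η·ξ^p = 0` and `[ξ, [η, ζ]] = 0`. -/
inductive XiRel (n p : ℕ) : FreeAlgebra ℂ (Fin n) → FreeAlgebra ℂ (Fin n) → Prop
  | anti : ∀ ξ η : FreeAlgebra ℂ (Fin n), ξ ∈ Espan n → η ∈ Espan n →
      XiRel n p (ξ ^ p * η + η * ξ ^ p) 0
  | central : ∀ ξ η ζ : FreeAlgebra ℂ (Fin n), ξ ∈ Espan n → η ∈ Espan n → ζ ∈ Espan n →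
      XiRel n p (ξ * (η * ζ - ζ * η) - (η * ζ - ζ * η) * ξ) 0

/-- The para-algebra `Ξ_n(p)` of order `p` and degree `n`. -/
abbrev Xi (n p : ℕ) : Type := RingQuot (XiRel n p)

/-- The generators `ϑ_i` of `Ξ_n(p)`. -/
def vth (n p : ℕ) (i : Fin n) : Xi n p :=
  RingQuot.mkAlgHom ℂ (XiRel n p) (FreeAlgebra.ι ℂ i)

/-- The span `E` of the generators `ϑ_1, …, ϑ_n` inside `Ξ_n(p)`. -/
def XiE (n p : ℕ) : Submodule ℂ (Xi n p) :=
  Submodule.span ℂ (Set.range (vth n p))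

open Finset in
private lemma aux_coeff (m : ℕ) (r : Fin m → Fin m) :
    (∑ T ∈ Finset.univ.filter (fun T : Finset (Fin m) => ∀ k, r k ∈ T), (-1:ℤ)^(m - T.card))
    = if Function.Bijective r then 1 else 0 := by
  classical
  set R : Finset (Fin m) := Finset.image r Finset.univ with hR
  have key : (∑ T ∈ Finset.univ.filter (fun T : Finset (Fin m) => ∀ k, r k ∈ T),
      (-1:ℤ)^(m - T.card)) = ∑ S ∈ Rᶜ.powerset, (-1:ℤ)^S.card := by
    refine Finset.sum_bij' (fun T _ => Tᶜ) (fun S _ => Sᶜ) ?_ ?_ ?_ ?_ ?_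
    · intro T hT
      simp only [mem_filter, mem_univ, true_and] at hT
      simp only [mem_powerset]
      intro i hi
      simp only [mem_compl] at hi ⊢
      intro hiR
      rw [hR] at hiR
      obtain ⟨k, -, rfl⟩ := Finset.mem_image.mp hiR
      exact hi (hT k)
    · intro S hS
      simp only [mem_powerset] at hS
      simp only [mem_filter, mem_univ, true_and]
      intro k
      simp only [mem_compl]
      intro hk
      have : r k ∈ Rᶜ := hS hk
      simp [hR, mem_compl] at this
    · intro T _; simp
    · intro S _; simp
    · intro T hT
      congr 1
      rw [Finset.card_compl]
      simp
  rw [key, Finset.sum_powerset_neg_one_pow_card]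
  congr 1
  rw [Finset.compl_eq_empty_iff, eq_iff_iff]
  constructor
  · intro h
    have hsurj : Function.Surjective r := by
      intro y
      have : y ∈ R := h ▸ Finset.mem_univ y
      obtain ⟨k, -, hk⟩ := Finset.mem_image.mp this
      exact ⟨k, hk⟩
    exact Finite.surjective_iff_bijective.mp hsurj
  · intro h
    exact Finset.image_univ_of_surjective h.surjective

/-- Polarization identity in an arbitrary ring. -/
private lemma aux_polarization {A : Type*} [Ring A] (m : ℕ) (x : Fin m → A) :
    ∑ σ : Equiv.Perm (Fin m), (List.ofFn fun k => x (σ k)).prod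
      = ∑ T : Finset (Fin m), (-1 : ℤ) ^ (m - T.card) • (∑ i ∈ T, x i) ^ m := by
  classical
  set F := MultilinearMap.mkPiAlgebraFin ℤ m A with hF
  have h1 : ∀ T : Finset (Fin m), (∑ i ∈ T, x i) ^ m
      = ∑ r ∈ Fintype.piFinset (fun _ : Fin m => T), F fun k => x (r k) := by
    intro T
    rw [← MultilinearMap.mkPiAlgebraFin_apply_const (R := ℤ) (n := m) (∑ i ∈ T, x i)]
    exact F.map_sum_finset (fun _ j => x j) (fun _ => T)
  have hpi : ∀ T : Finset (Fin m), Fintype.piFinset (fun _ : Fin m => T)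
      = Finset.univ.filter (fun r : Fin m → Fin m => ∀ k, r k ∈ T) := by
    intro T; ext r; simp [Fintype.mem_piFinset]
  calc ∑ σ : Equiv.Perm (Fin m), (List.ofFn fun k => x (σ k)).prod
      = ∑ r ∈ Finset.univ.filter (fun r : Fin m → Fin m => Function.Bijective r),
          F fun k => x (r k) := by
        refine Finset.sum_bij (fun σ _ => (σ : Fin m → Fin m)) ?_ ?_ ?_ ?_
        · intro σ _
          simp only [Finset.mem_filter, Finset.mem_univ, true_and]
          exact σ.bijective
        · intro σ _ τ _ h; exact Equiv.coe_fn_injective h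
        · intro r hr
          simp only [Finset.mem_filter, Finset.mem_univ, true_and] at hr
          exact ⟨Equiv.ofBijective r hr, Finset.mem_univ _, rfl⟩
        · intro σ _; simp [hF]
    _ = ∑ r : Fin m → Fin m, (if Function.Bijective r then (1:ℤ) else 0) • F fun k => x (r k) := by
        rw [Finset.sum_filter]
        refine Finset.sum_congr rfl fun r _ => ?_
        split <;> simp
    _ = ∑ r : Fin m → Fin m,
          (∑ T ∈ Finset.univ.filter (fun T : Finset (Fin m) => ∀ k, r k ∈ T),
            (-1:ℤ)^(m - T.card)) • F fun k => x (r k) := by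
        refine Finset.sum_congr rfl fun r _ => ?_
        rw [aux_coeff]
    _ = ∑ r : Fin m → Fin m, ∑ T : Finset (Fin m),
          (if ∀ k, r k ∈ T then (-1:ℤ)^(m - T.card) • F fun k => x (r k) else 0) := by
        refine Finset.sum_congr rfl fun r _ => ?_
        rw [Finset.sum_smul, Finset.sum_filter]
    _ = ∑ T : Finset (Fin m), ∑ r : Fin m → Fin m,
          (if ∀ k, r k ∈ T then (-1:ℤ)^(m - T.card) • F fun k => x (r k) else 0) :=
        Finset.sum_comm
    _ = ∑ T : Finset (Fin m), (-1 : ℤ) ^ (m - T.card) • (∑ i ∈ T, x i) ^ m := by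
        refine Finset.sum_congr rfl fun T _ => ?_
        rw [h1, hpi, Finset.smul_sum, Finset.sum_filter]

private lemma aux_pow_zero {n p : ℕ} {x : Xi n p} (hx : x ∈ XiE n p) : x ^ (p + 1) = 0 := by
  have hmap : XiE n p
      = Submodule.map (RingQuot.mkAlgHom ℂ (XiRel n p)).toLinearMap (Espan n) := by
    rw [XiE, Espan, Submodule.map_span]
    congr 1
    ext y
    constructor
    · rintro ⟨i, rfl⟩
      exact ⟨FreeAlgebra.ι ℂ i, ⟨i, rfl⟩, rfl⟩
    · rintro ⟨z, ⟨i, rfl⟩, rfl⟩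
      exact ⟨i, rfl⟩
  rw [hmap] at hx
  obtain ⟨ζ, hζ, rfl⟩ := hx
  set f := RingQuot.mkAlgHom ℂ (XiRel n p) with hf
  have h0 : f (ζ ^ p * ζ + ζ * ζ ^ p) = f 0 :=
    RingQuot.mkAlgHom_rel ℂ (XiRel.anti ζ ζ hζ hζ)
  have h1 : f ζ ^ (p + 1) + f ζ ^ (p + 1) = 0 := by
    have := h0
    simp only [map_add, map_mul, map_pow, map_zero] at this
    rw [← pow_succ, ← pow_succ'] at this
    exact this
  have h2 : (2 : ℂ) • ((f ζ) ^ (p + 1)) = 0 := by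
    rw [two_smul]; exact h1
  have := smul_eq_zero.mp h2
  simpa using this.resolve_left two_ne_zero

/-- For any `ξ_1, …, ξ_{p+1}` in the span of the generators of `Ξ_n(p)`,
the symmetrized product `Σ_{σ ∈ Sym(p+1)} ξ_{σ(1)}⋯ξ_{σ(p+1)}` vanishes. -/
theorem stmt_1 (n p : ℕ) (hn : 0 < n) (hp : 0 < p)
    (ξ : Fin (p + 1) → Xi n p) (hξ : ∀ k, ξ k ∈ XiE n p) :
    ∑ σ : Equiv.Perm (Fin (p + 1)), (List.ofFn fun k => ξ (σ k)).prod = 0 := by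
  rw [aux_polarization]
  refine Finset.sum_eq_zero fun T _ => ?_
  rw [aux_pow_zero (Submodule.sum_mem _ fun i _ => hξ i)]; exact smul_zero _
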